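/- There exists a convex cyclic hexagon in the Euclidean plane with circumradius 5525/2, consecutive sides 2044, 2880, 3315, 3124, 235, 4420, rational area 17227230, and all nine diagonals rational: the central diagonal AD = 5525 and the other eight diagonals have lengths 1751561/325, 5304, 4420, 5133, 26664/5, 3315, 4557, 26167/5. -/

import Mathlib

open Set MeasureTheory Metric

noncomputable abbrev E2 : Type := EuclideanSpace ℝ (Fin 2)
noncomputable def pt (a b : ℝ) : E2 := WithLp.toLp 2 ![a, b]

/-- vertices -/
noncomputable def vA : E2 := pt (5525/2) 0
noncomputable def vB : E2 := pt (22169753/11050) (10491852/5525)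
noncomputable def vC : E2 := pt (-1547/2) 2652
noncomputable def vD : E2 := pt (-5525/2) 0
noncomputable def vE : E2 := pt (-11006873/11050) (-14236068/5525)
noncomputable def vF : E2 := pt (-1547/2) (-2652)
noncomputable def vO : E2 := pt 0 0

lemma dist_pt (a b c d : ℝ) : dist (pt a b) (pt c d) = Real.sqrt ((a-c)^2 + (b-d)^2) := by
  rw [EuclideanSpace.dist_eq, Fin.sum_univ_two]
  norm_num [pt, Real.dist_eq, sq_abs]

lemma dist_pt_eq {a b c d q : ℝ} (hq : 0 ≤ q) (h : (a-c)^2 + (b-d)^2 = q^2) :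
    dist (pt a b) (pt c d) = q := by
  rw [dist_pt, h, Real.sqrt_sq hq]

/-! distances -/
lemma dOA : dist vO vA = 5525/2 := dist_pt_eq (by norm_num) (by norm_num)
lemma dOB : dist vO vB = 5525/2 := dist_pt_eq (by norm_num) (by norm_num)
lemma dOC : dist vO vC = 5525/2 := dist_pt_eq (by norm_num) (by norm_num)
lemma dOD : dist vO vD = 5525/2 := dist_pt_eq (by norm_num) (by norm_num)
lemma dOE : dist vO vE = 5525/2 := dist_pt_eq (by norm_num) (by norm_num)
lemma dOF : dist vO vF = 5525/2 := dist_pt_eq (by norm_num) (by norm_num)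
lemma dAB : dist vA vB = 2044 := dist_pt_eq (by norm_num) (by norm_num)
lemma dBC : dist vB vC = 2880 := dist_pt_eq (by norm_num) (by norm_num)
lemma dCD : dist vC vD = 3315 := dist_pt_eq (by norm_num) (by norm_num)
lemma dDE : dist vD vE = 3124 := dist_pt_eq (by norm_num) (by norm_num)
lemma dEF : dist vE vF = 235 := dist_pt_eq (by norm_num) (by norm_num)
lemma dFA : dist vF vA = 4420 := dist_pt_eq (by norm_num) (by norm_num)
lemma dAD : dist vA vD = 5525 := dist_pt_eq (by norm_num) (by norm_num)
lemma dBE : dist vB vE = 1751561/325 := dist_pt_eq (by norm_num) (by norm_num)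
lemma dCF : dist vC vF = 5304 := dist_pt_eq (by norm_num) (by norm_num)
lemma dAC : dist vA vC = 4420 := dist_pt_eq (by norm_num) (by norm_num)
lemma dBD : dist vB vD = 5133 := dist_pt_eq (by norm_num) (by norm_num)
lemma dCE : dist vC vE = 26167/5 := dist_pt_eq (by norm_num) (by norm_num)
lemma dDF : dist vD vF = 3315 := dist_pt_eq (by norm_num) (by norm_num)
lemma dBF : dist vB vF = 26664/5 := dist_pt_eq (by norm_num) (by norm_num)
lemma dAE : dist vA vE = 4557 := dist_pt_eq (by norm_num) (by norm_num)

/-! extreme points -/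
lemma extreme_of_sphere {s : Set E2} {O x : E2} {r : ℝ} (hr : 0 < r)
    (hs : ∀ y ∈ s, dist O y = r) (hx : x ∈ s) :
    x ∈ Set.extremePoints ℝ (convexHull ℝ s) := by
  have hsub : convexHull ℝ s ⊆ closedBall O r :=
    convexHull_min (fun y hy => by rw [mem_closedBall, dist_comm, hs y hy]) (convex_closedBall O r)
  refine ⟨subset_convexHull ℝ s hx, fun x₁ hx₁ x₂ hx₂ hseg => ?_⟩
  by_cases h : x₁ = x₂
  · subst h
    rw [openSegment_same] at hseg
    exact (Set.mem_singleton_iff.mp hseg).symm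
  · exfalso
    have := (strictConvex_closedBall ℝ O r).openSegment_subset (hsub hx₁) (hsub hx₂) h hseg
    rw [interior_closedBall O hr.ne'] at this
    rw [mem_ball, dist_comm, hs x hx] at this
    exact lt_irrefl r this

/-! hull membership machinery -/
lemma combo_mem_hull {S : Set E2} {x y z p : E2} (hx : x ∈ S) (hy : y ∈ S) (hz : z ∈ S)
    {a b c : ℝ} (ha : 0 ≤ a) (hb : 0 ≤ b) (hc : 0 ≤ c) (h1 : a + b + c = 1)
    (hp : ∀ i, a * x i + b * y i + c * z i = p i) : p ∈ convexHull ℝ S := by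
  have h := Finset.centerMass_mem_convexHull (Finset.univ : Finset (Fin 3))
    (w := ![a, b, c]) (z := ![x, y, z])
    (by intro i _; fin_cases i <;> simpa)
    (by simp [Fin.sum_univ_three]; linarith)
    (by intro i _; fin_cases i <;> simpa)
  convert h using 1
  rw [Finset.centerMass]
  simp only [Fin.sum_univ_three, Matrix.cons_val_zero, Matrix.cons_val_one, Matrix.head_cons,
    Matrix.cons_val_two, Matrix.tail_cons]
  rw [h1, inv_one, one_smul]
  ext i
  rw [← hp i]
  simp [PiLp.add_apply, PiLp.smul_apply]

lemma convex_halfplane (α β γ : ℝ) : Convex ℝ {p : E2 | 0 ≤ α * p 0 + β * p 1 + γ} := by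
  intro p hp q hq a b ha hb hab
  rw [mem_setOf_eq] at hp hq ⊢
  simp only [PiLp.add_apply, PiLp.smul_apply, smul_eq_mul]
  have h3 : a * γ + b * γ = γ := by rw [← add_mul, hab, one_mul]
  nlinarith [mul_nonneg ha hp, mul_nonneg hb hq, h3]

/-- the hexagon as intersection of halfplanes -/
def hexH : Set E2 :=
  {p | 0 ≤ -10491852 * p 0 + -4177936 * p 1 + 28983741150 ∧
       0 ≤ -4160448 * p 0 + -15358464 * p 1 + 37512540000 ∧
       0 ≤ 2652 * p 0 + -1989 * p 1 + 7326150 ∧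
       0 ≤ 14236068 * p 0 + 9759376 * p 1 + 39327137850 ∧
       0 ≤ 416232 * p 0 + 1229849 * p 1 + 3583515000 ∧
       0 ≤ -2652 * p 0 + 3536 * p 1 + 7326150}

lemma hexH_convex : Convex ℝ hexH := by
  have : hexH = {p : E2 | 0 ≤ -10491852 * p 0 + -4177936 * p 1 + 28983741150} ∩
      ({p : E2 | 0 ≤ -4160448 * p 0 + -15358464 * p 1 + 37512540000} ∩
      ({p : E2 | 0 ≤ 2652 * p 0 + -1989 * p 1 + 7326150} ∩
      ({p : E2 | 0 ≤ 14236068 * p 0 + 9759376 * p 1 + 39327137850} ∩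
      ({p : E2 | 0 ≤ 416232 * p 0 + 1229849 * p 1 + 3583515000} ∩
       {p : E2 | 0 ≤ -2652 * p 0 + 3536 * p 1 + 7326150})))) := rfl
  rw [this]
  exact (convex_halfplane _ _ _).inter ((convex_halfplane _ _ _).inter
    ((convex_halfplane _ _ _).inter ((convex_halfplane _ _ _).inter
    ((convex_halfplane _ _ _).inter (convex_halfplane _ _ _)))))

lemma hexS_subset_hexH : ({vA, vB, vC, vD, vE, vF} : Set E2) ⊆ hexH := by
  rintro p (rfl | rfl | rfl | rfl | rfl | rfl) <;>
    refine ⟨?_, ?_, ?_, ?_, ?_, ?_⟩ <;>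
    norm_num [vA, vB, vC, vD, vE, vF, pt]

lemma hull_subset_hexH : convexHull ℝ ({vA, vB, vC, vD, vE, vF} : Set E2) ⊆ hexH :=
  convexHull_min hexS_subset_hexH hexH_convex

lemma hexH_subset_tris : hexH ⊆ convexHull ℝ ({vA, vB, vC} : Set E2) ∪
    (convexHull ℝ ({vA, vC, vD} : Set E2) ∪
    (convexHull ℝ ({vA, vD, vE} : Set E2) ∪ convexHull ℝ ({vA, vE, vF} : Set E2))) := by
  rintro p ⟨h1, h2, h3, h4, h5, h6⟩
  have memx : ∀ (x y z : E2), x ∈ ({x, y, z} : Set E2) := fun _ _ _ => mem_insert _ _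
  have memy : ∀ (x y z : E2), y ∈ ({x, y, z} : Set E2) :=
    fun _ _ _ => mem_insert_of_mem _ (mem_insert _ _)
  have memz : ∀ (x y z : E2), z ∈ ({x, y, z} : Set E2) :=
    fun _ _ _ => mem_insert_of_mem _ (mem_insert_of_mem _ rfl)
  by_cases c1 : -2652 * p 0 + -3536 * p 1 + 7326150 ≤ 0
  · refine Or.inl (combo_mem_hull (memx _ _ _) (memy _ _ _) (memz _ _ _)
      (a := -7223/45172400 * p 0 + -3333/5646550 * p 1 + 23575/16352)
      (b := 221/392448 * p 0 + 221/294336 * p 1 + -1221025/784896)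
      (c := -1711/4243200 * p 0 + -511/3182400 * p 1 + 1711/1536)
      (by linarith) (by linarith) (by linarith) (by ring) ?_)
    intro i
    fin_cases i <;>
      · simp only [Fin.mk_zero, Fin.mk_one, vA, vB, vC, pt, PiLp.toLp_apply, Matrix.cons_val_zero, Matrix.cons_val_one, Matrix.head_cons]
        ring
  have c1' : 0 < -2652 * p 0 + -3536 * p 1 + 7326150 := not_le.mp c1
  by_cases c2 : 0 ≤ p 1
  · refine Or.inr (Or.inl (combo_mem_hull (memx _ _ _) (memy _ _ _) (memz _ _ _)
      (a := 1/5525 * p 0 + -3/22100 * p 1 + 1/2)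
      (b := 1/2652 * p 1)
      (c := -1/5525 * p 0 + -4/16575 * p 1 + 1/2)
      (by linarith) (by linarith) (by linarith) (by ring) ?_))
    intro i
    fin_cases i <;>
      · simp only [Fin.mk_zero, Fin.mk_one, vA, vC, vD, pt, PiLp.toLp_apply, Matrix.cons_val_zero, Matrix.cons_val_one, Matrix.head_cons]
        ring
  have c2' : p 1 < 0 := not_le.mp c2
  by_cases c3 : 14236068 * p 0 + -20766249 * p 1 + -39327137850 ≤ 0
  · refine Or.inr (Or.inr (Or.inl (combo_mem_hull (memx _ _ _) (memy _ _ _) (memz _ _ _)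
      (a := 1/5525 * p 0 + 3124/25177425 * p 1 + 1/2)
      (b := -1/5525 * p 0 + 4557/17260100 * p 1 + 1/2)
      (c := -5525/14236068 * p 1)
      (by linarith) (by linarith) (by linarith) (by ring) ?_)))
    intro i
    fin_cases i <;>
      · simp only [Fin.mk_zero, Fin.mk_one, vA, vD, vE, pt, PiLp.toLp_apply, Matrix.cons_val_zero, Matrix.cons_val_one, Matrix.head_cons]
        ring
  have c3' : 0 < 14236068 * p 0 + -20766249 * p 1 + -39327137850 := not_le.mp c3
  refine Or.inr (Or.inr (Or.inr (combo_mem_hull (memx _ _ _) (memy _ _ _) (memz _ _ _)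
    (a := 738/8392475 * p 0 + 26167/100709700 * p 1 + 1150/1519)
    (b := -221/71393 * p 0 + 884/214179 * p 1 + 1221025/142786)
    (c := 781/259675 * p 0 + -4557/1038700 * p 1 + -781/94)
    (by linarith) (by linarith) (by linarith) (by ring) ?_)))
  intro i
  fin_cases i <;>
    · simp only [Fin.mk_zero, Fin.mk_one, vA, vE, vF, pt, PiLp.toLp_apply, Matrix.cons_val_zero, Matrix.cons_val_one, Matrix.head_cons]
      ring


lemma line_null (α β γ : ℝ) (h : α ≠ 0 ∨ β ≠ 0) :
    volume {p : E2 | α * p 0 + β * p 1 = γ} = 0 := by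
  have key : ∀ P₀ : E2, α * P₀ 0 + β * P₀ 1 = γ →
      volume {p : E2 | α * p 0 + β * p 1 = γ} = 0 := by
    intro P₀ hP₀
    set v : E2 := pt β (-α) with hv
    have hsub : {p : E2 | α * p 0 + β * p 1 = γ} ⊆
        (AffineSubspace.mk' P₀ (ℝ ∙ v) : Set E2) := by
      intro p hp
      rw [mem_setOf_eq] at hp
      rw [SetLike.mem_coe, AffineSubspace.mem_mk', Submodule.mem_span_singleton]
      rcases h with hα | hβ
      · refine ⟨(P₀ 1 - p 1)/α, ?_⟩
        ext i
        fin_cases i <;>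
          simp only [PiLp.smul_apply, smul_eq_mul, vsub_eq_sub, PiLp.sub_apply, hv, pt,
            Fin.mk_zero, Fin.mk_one, PiLp.toLp_apply,
            Matrix.cons_val_zero, Matrix.cons_val_one, Matrix.head_cons] <;>
          · field_simp
            linarith
      · refine ⟨(p 0 - P₀ 0)/β, ?_⟩ -- second case: first coord may close by field_simp alone
        ext i
        fin_cases i <;>
          simp only [PiLp.smul_apply, smul_eq_mul, vsub_eq_sub, PiLp.sub_apply, hv, pt,
            Fin.mk_zero, Fin.mk_one, PiLp.toLp_apply,
            Matrix.cons_val_zero, Matrix.cons_val_one, Matrix.head_cons] <;>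
          · field_simp
            try linarith
    refine measure_mono_null hsub (Measure.addHaar_affineSubspace _ _ ?_)
    intro htop
    have hd : (ℝ ∙ v) = ⊤ := by
      have := congrArg AffineSubspace.direction htop
      rwa [AffineSubspace.direction_mk', AffineSubspace.direction_top] at this
    have hw : (pt α β : E2) ∈ ℝ ∙ v := hd ▸ Submodule.mem_top
    rw [Submodule.mem_span_singleton] at hw
    obtain ⟨t, ht⟩ := hw
    have h0 : t * β = α := by
      have := congrArg (fun w : E2 => w 0) ht
      simpa [hv, pt, PiLp.smul_apply] using this
    have h1 : t * (-α) = β := by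
      have := congrArg (fun w : E2 => w 1) ht
      simpa [hv, pt, PiLp.smul_apply] using this
    have htpos : (0:ℝ) < t^2 + 1 := by positivity
    rcases h with hα | hβ
    · have hz : α * (t^2 + 1) = 0 := by linear_combination (-t) * h1 - h0
      exact hα ((mul_eq_zero.mp hz).resolve_right htpos.ne')
    · have hz : β * (t^2 + 1) = 0 := by linear_combination t * h0 - h1
      exact hβ ((mul_eq_zero.mp hz).resolve_right htpos.ne')
  rcases h with hα | hβ
  · refine key (pt (γ/α) 0) ?_
    simp only [pt, PiLp.toLp_apply, Matrix.cons_val_zero, Matrix.cons_val_one, Matrix.head_cons]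
    field_simp
    ring
  · refine key (pt 0 (γ/β)) ?_
    simp only [pt, PiLp.toLp_apply, Matrix.cons_val_zero, Matrix.cons_val_one, Matrix.head_cons]
    field_simp
    ring


noncomputable def Lmap (u v : E2) : E2 →ₗ[ℝ] E2 where
  toFun := fun x => x 0 • u + x 1 • v
  map_add' := fun x y => by
    simp only [PiLp.add_apply, add_smul]; abel
  map_smul' := fun c x => by
    simp only [PiLp.smul_apply, smul_eq_mul, RingHom.id_apply, smul_add, mul_smul]

lemma Lmap_det (u v : E2) : LinearMap.det (Lmap u v) = u 0 * v 1 - u 1 * v 0 := by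
  rw [← LinearMap.det_toMatrix (EuclideanSpace.basisFun (Fin 2) ℝ).toBasis, Matrix.det_fin_two]
  simp only [LinearMap.toMatrix_apply, OrthonormalBasis.coe_toBasis,
    EuclideanSpace.basisFun_apply, OrthonormalBasis.coe_toBasis_repr_apply,
    EuclideanSpace.basisFun_repr, Lmap, LinearMap.coe_mk, AddHom.coe_mk,
    EuclideanSpace.single_apply, PiLp.add_apply, PiLp.smul_apply, smul_eq_mul]
  norm_num
  ring

def stdTri : Set E2 := {p | 0 ≤ p 0 ∧ 0 ≤ p 1 ∧ p 0 + p 1 ≤ 1}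

lemma stdTri_vol : volume stdTri = ENNReal.ofReal (1/2) := by
  have e1 := EuclideanSpace.volume_preserving_symm_measurableEquiv_toLp (Fin 2)
  have e2 := volume_preserving_finTwoArrow ℝ
  set T2 : Set (ℝ × ℝ) := {q | 0 ≤ q.1 ∧ 0 ≤ q.2 ∧ q.1 + q.2 ≤ 1} with hT2
  have hT2m : MeasurableSet T2 := by
    apply MeasurableSet.inter (measurableSet_le measurable_const measurable_fst)
    exact MeasurableSet.inter (measurableSet_le measurable_const measurable_snd)
      (measurableSet_le (measurable_fst.add measurable_snd) measurable_const)
  have hpre : stdTri = (MeasurableEquiv.toLp 2 (Fin 2 → ℝ)).symm ⁻¹'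
      ((MeasurableEquiv.finTwoArrow : (Fin 2 → ℝ) ≃ᵐ ℝ × ℝ) ⁻¹' T2) := by
    ext p
    simp [stdTri, MeasurableEquiv.finTwoArrow, MeasurableEquiv.toLp_symm_apply, hT2]
  rw [hpre, e1.measure_preimage (MeasurableEquiv.measurable _ hT2m).nullMeasurableSet,
    e2.measure_preimage hT2m.nullMeasurableSet]
  rw [Measure.volume_eq_prod, Measure.prod_apply hT2m]
  have hslice : ∀ x : ℝ, volume (Prod.mk x ⁻¹' T2) =
      (Icc (0:ℝ) 1).indicator (fun x => ENNReal.ofReal (1 - x)) x := by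
    intro x
    by_cases hx : x ∈ Icc (0:ℝ) 1
    · rw [indicator_of_mem hx]
      have : Prod.mk x ⁻¹' T2 = Icc 0 (1 - x) := by
        ext y
        simp only [hT2, mem_preimage, mem_setOf_eq, mem_Icc]
        constructor
        · rintro ⟨_, h2, h3⟩; exact ⟨h2, by linarith⟩
        · rintro ⟨h2, h3⟩; exact ⟨hx.1, h2, by linarith⟩
      rw [this, Real.volume_Icc, sub_zero]
    · rw [indicator_of_notMem hx]
      have : Prod.mk x ⁻¹' T2 = ∅ := by
        ext y
        simp only [hT2, mem_preimage, mem_setOf_eq, mem_empty_iff_false, iff_false]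
        rintro ⟨h1, h2, h3⟩
        rw [mem_Icc, not_and_or] at hx
        rcases hx with h | h <;> [exact h h1; linarith [not_le.mp h]]
      rw [this, measure_empty]
  rw [lintegral_congr hslice, lintegral_indicator measurableSet_Icc]
  rw [← ofReal_integral_eq_lintegral_ofReal]
  · rw [integral_Icc_eq_integral_Ioc, ← intervalIntegral.integral_of_le zero_le_one]
    rw [intervalIntegral.integral_sub intervalIntegrable_const intervalIntegral.intervalIntegrable_id,
      intervalIntegral.integral_const, integral_id]
    norm_num
  · exact (continuous_const.sub continuous_id).integrableOn_Icc
  · refine (ae_restrict_iff' measurableSet_Icc).mpr (ae_of_all _ fun x hx => ?_)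
    simp only [Pi.zero_apply]
    linarith [hx.2]

lemma stdTri_hull : convexHull ℝ ({0, pt 1 0, pt 0 1} : Set E2) = stdTri := by
  apply Subset.antisymm
  · apply convexHull_min
    · rintro q (rfl | rfl | rfl)
      · exact ⟨le_refl _, le_refl _, by norm_num [PiLp.zero_apply]⟩
      · refine ⟨?_, ?_, ?_⟩ <;> norm_num [pt]
      · refine ⟨?_, ?_, ?_⟩ <;> norm_num [pt]
    · intro p hp q hq a b ha hb hab
      obtain ⟨hp1, hp2, hp3⟩ := hp
      obtain ⟨hq1, hq2, hq3⟩ := hq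
      refine ⟨?_, ?_, ?_⟩ <;>
        simp only [PiLp.add_apply, PiLp.smul_apply, smul_eq_mul] <;>
        nlinarith [mul_nonneg ha hp1, mul_nonneg hb hq1, mul_nonneg ha hp2,
          mul_nonneg hb hq2, mul_le_mul_of_nonneg_left hp3 ha,
          mul_le_mul_of_nonneg_left hq3 hb]
  · rintro p ⟨h1, h2, h3⟩
    refine combo_mem_hull (mem_insert _ _) (mem_insert_of_mem _ (mem_insert _ _))
      (mem_insert_of_mem _ (mem_insert_of_mem _ rfl))
      (a := 1 - p 0 - p 1) (b := p 0) (c := p 1) (by linarith) h1 h2 (by ring) ?_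
    intro i
    fin_cases i <;> simp [pt, PiLp.zero_apply]

lemma hull_tri_vol (P Q R : E2) :
    volume (convexHull ℝ ({P, Q, R} : Set E2)) =
      ENNReal.ofReal (|(Q 0 - P 0) * (R 1 - P 1) - (Q 1 - P 1) * (R 0 - P 0)| / 2) := by
  set u : E2 := Q - P with hu
  set v : E2 := R - P with hvv
  set f : E2 →ᵃ[ℝ] E2 := AffineMap.mk' (fun x => Lmap u v x + P) (Lmap u v) 0
    (fun p' => by simp) with hf
  have f0 : f 0 = P := by simp [hf, AffineMap.coe_mk', map_zero]
  have f1 : f (pt 1 0) = Q := by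
    show Lmap u v (pt 1 0) + P = Q
    simp [Lmap, pt, hu]
  have f2 : f (pt 0 1) = R := by
    show (Lmap u v (pt 0 1) + P : E2) = R
    simp [Lmap, pt, hvv]
  have himg : f '' ({0, pt 1 0, pt 0 1} : Set E2) = {P, Q, R} := by
    rw [image_insert_eq, image_insert_eq, image_singleton, f0, f1, f2]
  have hhull : convexHull ℝ ({P, Q, R} : Set E2) = (fun x => x + P) '' (Lmap u v '' stdTri) := by
    rw [← himg, ← AffineMap.image_convexHull, stdTri_hull]
    ext w
    simp [hf, AffineMap.coe_mk', image_image]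
  rw [hhull]
  have : (fun x : E2 => x + P) '' (Lmap u v '' stdTri) =
      (fun x : E2 => x + -P) ⁻¹' (Lmap u v '' stdTri) := by
    ext w
    simp only [mem_image, mem_preimage]
    constructor
    · rintro ⟨x, hx, rfl⟩; simpa
    · intro hw; exact ⟨w + -P, hw, by abel⟩
  rw [this, measure_preimage_add_right, Measure.addHaar_image_linearMap, Lmap_det, stdTri_vol,
    ← ENNReal.ofReal_mul (abs_nonneg _)]
  congr 1
  rw [hu, hvv]
  simp only [PiLp.sub_apply]
  ring

/-! assembling the volume -/

lemma tri_sub_halfplane {x y z : E2} (α β γ : ℝ)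
    (hx : 0 ≤ α * x 0 + β * x 1 + γ) (hy : 0 ≤ α * y 0 + β * y 1 + γ)
    (hz : 0 ≤ α * z 0 + β * z 1 + γ) :
    convexHull ℝ ({x, y, z} : Set E2) ⊆ {p : E2 | 0 ≤ α * p 0 + β * p 1 + γ} :=
  convexHull_min (by rintro q (rfl | rfl | rfl) <;> assumption) (convex_halfplane α β γ)

lemma hull_tri_nm (x y z : E2) :
    NullMeasurableSet (convexHull ℝ ({x, y, z} : Set E2)) volume :=
  ((((Set.finite_singleton z).insert y).insert x).isCompact_convexHull ℝ |>.measurableSet).nullMeasurableSet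

lemma hexagon_hull_eq :
    convexHull ℝ ({vA, vB, vC, vD, vE, vF} : Set E2) =
      convexHull ℝ ({vA, vB, vC} : Set E2) ∪
      (convexHull ℝ ({vA, vC, vD} : Set E2) ∪
      (convexHull ℝ ({vA, vD, vE} : Set E2) ∪ convexHull ℝ ({vA, vE, vF} : Set E2))) := by
  apply Subset.antisymm (hull_subset_hexH.trans hexH_subset_tris)
  have sub : ∀ {s : Set E2}, s ⊆ ({vA, vB, vC, vD, vE, vF} : Set E2) →
      convexHull ℝ s ⊆ convexHull ℝ ({vA, vB, vC, vD, vE, vF} : Set E2) :=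
    fun h => convexHull_mono h
  refine union_subset (sub ?_) (union_subset (sub ?_) (union_subset (sub ?_) (sub ?_))) <;>
    · intro q hq
      simp only [mem_insert_iff, mem_singleton_iff] at hq ⊢
      tauto

lemma hexagon_volume :
    volume (convexHull ℝ ({vA, vB, vC, vD, vE, vF} : Set E2)) = 17227230 := by
  have hT1 : volume (convexHull ℝ ({vA, vB, vC} : Set E2)) = ENNReal.ofReal 2354688 := by
    rw [hull_tri_vol]
    rw [show (vB 0 - vA 0) * (vC 1 - vA 1) - (vB 1 - vA 1) * (vC 0 - vA 0) = 4709376 by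
      norm_num [vA, vB, vC, pt]]
    rw [abs_of_pos (by norm_num)]
    norm_num
  have hT2 : volume (convexHull ℝ ({vA, vC, vD} : Set E2)) = ENNReal.ofReal 7326150 := by
    rw [hull_tri_vol]
    rw [show (vC 0 - vA 0) * (vD 1 - vA 1) - (vC 1 - vA 1) * (vD 0 - vA 0) = 14652300 by
      norm_num [vA, vC, vD, pt]]
    rw [abs_of_pos (by norm_num)]
    norm_num
  have hT3 : volume (convexHull ℝ ({vA, vD, vE} : Set E2)) = ENNReal.ofReal 7118034 := by
    rw [hull_tri_vol]
    rw [show (vD 0 - vA 0) * (vE 1 - vA 1) - (vD 1 - vA 1) * (vE 0 - vA 0) = 14236068 by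
      norm_num [vA, vD, vE, pt]]
    rw [abs_of_pos (by norm_num)]
    norm_num
  have hT4 : volume (convexHull ℝ ({vA, vE, vF} : Set E2)) = ENNReal.ofReal 428358 := by
    rw [hull_tri_vol]
    rw [show (vE 0 - vA 0) * (vF 1 - vA 1) - (vE 1 - vA 1) * (vF 0 - vA 0) = 856716 by
      norm_num [vA, vE, vF, pt]]
    rw [abs_of_pos (by norm_num)]
    norm_num
  -- disjointness up to null sets
  have hd1 : AEDisjoint volume (convexHull ℝ ({vA, vB, vC} : Set E2))
      (convexHull ℝ ({vA, vC, vD} : Set E2) ∪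
      (convexHull ℝ ({vA, vD, vE} : Set E2) ∪ convexHull ℝ ({vA, vE, vF} : Set E2))) := by
    refine measure_mono_null ?_ (line_null (-2652) (-3536) (-7326150) (Or.inl (by norm_num)))
    rintro p ⟨hp1, hp2⟩
    have h1 : 0 ≤ 2652 * p 0 + 3536 * p 1 + -7326150 :=
      tri_sub_halfplane 2652 3536 (-7326150) (by norm_num [vA, pt]) (by norm_num [vB, pt])
        (by norm_num [vC, pt]) hp1
    have h2 : 0 ≤ -2652 * p 0 + -3536 * p 1 + 7326150 := by
      rcases hp2 with h | h | h
      · exact tri_sub_halfplane _ _ _ (by norm_num [vA, pt]) (by norm_num [vC, pt])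
          (by norm_num [vD, pt]) h
      · exact tri_sub_halfplane _ _ _ (by norm_num [vA, pt]) (by norm_num [vD, pt])
          (by norm_num [vE, pt]) h
      · exact tri_sub_halfplane _ _ _ (by norm_num [vA, pt]) (by norm_num [vE, pt])
          (by norm_num [vF, pt]) h
    show -2652 * p 0 + -3536 * p 1 = -7326150
    linarith
  have hd2 : AEDisjoint volume (convexHull ℝ ({vA, vC, vD} : Set E2))
      (convexHull ℝ ({vA, vD, vE} : Set E2) ∪ convexHull ℝ ({vA, vE, vF} : Set E2)) := by
    refine measure_mono_null ?_ (line_null 0 1 0 (Or.inr (by norm_num)))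
    rintro p ⟨hp1, hp2⟩
    have h1 : 0 ≤ 0 * p 0 + 1 * p 1 + 0 :=
      tri_sub_halfplane 0 1 0 (by norm_num [vA, pt]) (by norm_num [vC, pt])
        (by norm_num [vD, pt]) hp1
    have h2 : 0 ≤ 0 * p 0 + -1 * p 1 + 0 := by
      rcases hp2 with h | h
      · exact tri_sub_halfplane _ _ _ (by norm_num [vA, pt]) (by norm_num [vD, pt])
          (by norm_num [vE, pt]) h
      · exact tri_sub_halfplane _ _ _ (by norm_num [vA, pt]) (by norm_num [vE, pt])
          (by norm_num [vF, pt]) h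
    show 0 * p 0 + 1 * p 1 = 0
    linarith
  have hd3 : AEDisjoint volume (convexHull ℝ ({vA, vD, vE} : Set E2))
      (convexHull ℝ ({vA, vE, vF} : Set E2)) := by
    refine measure_mono_null ?_
      (line_null 14236068 (-20766249) 39327137850 (Or.inl (by norm_num)))
    rintro p ⟨hp1, hp2⟩
    have h1 : 0 ≤ -14236068 * p 0 + 20766249 * p 1 + 39327137850 :=
      tri_sub_halfplane _ _ _ (by norm_num [vA, pt]) (by norm_num [vD, pt])
        (by norm_num [vE, pt]) hp1
    have h2 : 0 ≤ 14236068 * p 0 + -20766249 * p 1 + -39327137850 :=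
      tri_sub_halfplane _ _ _ (by norm_num [vA, pt]) (by norm_num [vE, pt])
        (by norm_num [vF, pt]) hp2
    show 14236068 * p 0 + -20766249 * p 1 = 39327137850
    linarith
  rw [hexagon_hull_eq]
  rw [measure_union₀ ((hull_tri_nm _ _ _).union ((hull_tri_nm _ _ _).union (hull_tri_nm _ _ _))) hd1,
    measure_union₀ ((hull_tri_nm _ _ _).union (hull_tri_nm _ _ _)) hd2,
    measure_union₀ (hull_tri_nm _ _ _) hd3, hT1, hT2, hT3, hT4]
  rw [← ENNReal.ofReal_add (by norm_num) (by norm_num),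
    ← ENNReal.ofReal_add (by norm_num) (by norm_num),
    ← ENNReal.ofReal_add (by norm_num) (by norm_num)]
  norm_num

theorem brahmagupta_hexagon_example :
    ∃ (O A B C D E F : EuclideanSpace ℝ (Fin 2)),
      ({A, B, C, D, E, F} : Set (EuclideanSpace ℝ (Fin 2))) ⊆
        Set.extremePoints ℝ
          (convexHull ℝ ({A, B, C, D, E, F} : Set (EuclideanSpace ℝ (Fin 2)))) ∧
      dist O A = 5525/2 ∧ dist O B = 5525/2 ∧ dist O C = 5525/2 ∧
      dist O D = 5525/2 ∧ dist O E = 5525/2 ∧ dist O F = 5525/2 ∧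
      dist A B = 2044 ∧ dist B C = 2880 ∧ dist C D = 3315 ∧
      dist D E = 3124 ∧ dist E F = 235 ∧ dist F A = 4420 ∧
      dist A D = 5525 ∧
      ({dist B E, dist C F, dist A C, dist B D, dist C E,
        dist D F, dist B F, dist A E} : Multiset ℝ) =
        ({1751561/325, 5304, 4420, 5133, 26664/5, 3315, 4557, 26167/5} :
          Multiset ℝ) ∧
      MeasureTheory.volume
        (convexHull ℝ ({A, B, C, D, E, F} : Set (EuclideanSpace ℝ (Fin 2)))) =
        17227230 := by
  refine ⟨vO, vA, vB, vC, vD, vE, vF, ?_, dOA, dOB, dOC, dOD, dOE, dOF,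
    dAB, dBC, dCD, dDE, dEF, dFA, dAD, ?_, hexagon_volume⟩
  · intro x hx
    refine extreme_of_sphere (O := vO) (by norm_num : (0:ℝ) < 5525/2) ?_ hx
    rintro y (rfl | rfl | rfl | rfl | rfl | rfl)
    exacts [dOA, dOB, dOC, dOD, dOE, dOF]
  · rw [dBE, dCF, dAC, dBD, dCE, dDF, dBF, dAE]
    refine Quot.sound ?_
    refine List.Perm.cons _ (List.Perm.cons _ (List.Perm.cons _ (List.Perm.cons _ ?_)))
    exact (((List.Perm.swap ((3315:ℝ)) (26167/5) _).trans
        ((List.Perm.swap (26664/5) (26167/5) _).cons (3315:ℝ))).trans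
        (((List.Perm.swap (4557:ℝ) (26167/5) []).cons _).cons (3315:ℝ))).trans
      (List.Perm.swap (26664/5) (3315:ℝ) _)
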